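/- arXiv:1907.03792 — 2 statements merged into one kernel-verified Lean document; each statement's English description precedes it below -/
import Mathlib

section
/- Let V be uniform on {−1,+1} and Z ~ N(0,1) independent of V, and let γ > 0. Then the mutual information I(V; √γ·V + Z) equals γ − E[log cosh(√γ·Z + γ)]. -/
open MeasureTheory ProbabilityTheory Real
open scoped ENNReal NNReal

lemma aux_pdf (s y : ℝ) {v : ℝ} (hv : v = 1 ∨ v = -1) :
    (gaussianPDFReal (-s) 1 y + gaussianPDFReal s 1 y) / 2
      * (rexp (s * v * y) / Real.cosh (s * y)) = gaussianPDFReal (v * s) 1 y := by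
  have hX : rexp (s * y) ≠ 0 := Real.exp_ne_zero _
  have e1 : rexp (-(y - -s)^2 / (2 * (1:ℝ≥0))) = rexp (-(y^2+s^2)/2) / rexp (s*y) := by
    rw [← Real.exp_sub]; congr 1; push_cast; ring
  have e2 : rexp (-(y - s)^2 / (2 * (1:ℝ≥0))) = rexp (-(y^2+s^2)/2) * rexp (s*y) := by
    rw [← Real.exp_add]; congr 1; push_cast; ring
  have e3 : rexp (-(s*y)) = (rexp (s*y))⁻¹ := Real.exp_neg _
  rcases hv with hv | hv <;> subst hv
  · have e4 : rexp (-(y - 1 * s)^2 / (2 * (1:ℝ≥0))) = rexp (-(y^2+s^2)/2) * rexp (s*y) := by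
      rw [← Real.exp_add]; congr 1; push_cast; ring
    have e5 : rexp (s * 1 * y) = rexp (s * y) := by norm_num
    simp only [gaussianPDFReal, Real.cosh_eq, e1, e2, e3, e4, e5]
    field_simp
    ring
  · have e4 : rexp (-(y - -1 * s)^2 / (2 * (1:ℝ≥0))) = rexp (-(y^2+s^2)/2) / rexp (s*y) := by
      rw [← Real.exp_sub]; congr 1; push_cast; ring
    have e5 : rexp (s * -1 * y) = (rexp (s * y))⁻¹ := by rw [← Real.exp_neg]; congr 1; ring
    simp only [gaussianPDFReal, Real.cosh_eq, e1, e2, e3, e4, e5]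
    field_simp
    ring

lemma aux_smul_prod {α β : Type*} [MeasurableSpace α] [MeasurableSpace β]
    (c : ℝ≥0∞) (μ : Measure α) [SFinite μ] (ν : Measure β) [SFinite ν] :
    (c • μ).prod ν = c • (μ.prod ν) := by
  ext s hs
  rw [Measure.smul_apply, Measure.prod_apply hs, Measure.prod_apply hs,
    lintegral_smul_measure]

lemma aux_withDensity_map (v : ℝ) (ρ : Measure ℝ) [SFinite ρ]
    {f : ℝ × ℝ → ℝ≥0∞} (hf : Measurable f) :
    (ρ.map (Prod.mk v)).withDensity f
      = (ρ.withDensity (fun y => f (v, y))).map (Prod.mk v) := by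
  ext s hs
  rw [withDensity_apply _ hs, setLIntegral_map hs hf measurable_prodMk_left,
    Measure.map_apply measurable_prodMk_left hs, withDensity_apply _ (measurable_prodMk_left hs)]

lemma aux_mixture_withDensity (s : ℝ) {v : ℝ} (hv : v = 1 ∨ v = -1) :
    ((1/2 : ℝ≥0∞) • (gaussianReal (-s) 1 + gaussianReal s 1)).withDensity
        (fun y => ENNReal.ofReal (rexp (s * v * y) / Real.cosh (s * y)))
      = gaussianReal (v * s) 1 := by
  have hg : Measurable (fun y => ENNReal.ofReal (rexp (s * v * y) / Real.cosh (s * y))) := by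
    apply Measurable.ennreal_ofReal
    fun_prop
  have h1 : Measurable (gaussianPDF (-s) 1 * fun y => ENNReal.ofReal (rexp (s * v * y) / Real.cosh (s * y))) :=
    (measurable_gaussianPDF _ _).mul hg
  have h2 : Measurable (gaussianPDF s 1 * fun y => ENNReal.ofReal (rexp (s * v * y) / Real.cosh (s * y))) :=
    (measurable_gaussianPDF _ _).mul hg
  rw [withDensity_smul_measure, withDensity_add_measure,
    gaussianReal_of_var_ne_zero _ one_ne_zero, gaussianReal_of_var_ne_zero _ one_ne_zero,
    gaussianReal_of_var_ne_zero _ one_ne_zero,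
    ← withDensity_mul _ (measurable_gaussianPDF _ _) hg,
    ← withDensity_mul _ (measurable_gaussianPDF _ _) hg,
    ← withDensity_add_left h1,
    ← withDensity_smul _ (show Measurable ((gaussianPDF (-s) 1 * fun y => ENNReal.ofReal (rexp (s * v * y) / Real.cosh (s * y))) + (gaussianPDF s 1 * fun y => ENNReal.ofReal (rexp (s * v * y) / Real.cosh (s * y)))) from h1.add h2)]
  congr 1
  funext y
  have hc : (0:ℝ) < Real.cosh (s * y) := Real.cosh_pos _
  simp only [Pi.smul_apply, Pi.add_apply, Pi.mul_apply, smul_eq_mul, gaussianPDF]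
  rw [← ENNReal.ofReal_mul (gaussianPDFReal_nonneg _ _ _),
    ← ENNReal.ofReal_mul (gaussianPDFReal_nonneg _ _ _),
    ← ENNReal.ofReal_add (mul_nonneg (gaussianPDFReal_nonneg _ _ _) (by positivity))
      (mul_nonneg (gaussianPDFReal_nonneg _ _ _) (by positivity)),
    ← ENNReal.ofReal_ofNat, ← ENNReal.ofReal_one, ← ENNReal.ofReal_div_of_pos (by norm_num),
    ← ENNReal.ofReal_mul (by positivity)]
  congr 1
  linear_combination aux_pdf s y hv

lemma aux_map_pair (s v : ℝ) :
    Measure.map (fun p : ℝ × ℝ => (p.1, s * p.1 + p.2)) ((Measure.dirac v).prod (gaussianReal 0 1))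
      = Measure.map (Prod.mk v) (gaussianReal (v * s) 1) := by
  have hg : Measurable fun p : ℝ × ℝ => (p.1, s * p.1 + p.2) :=
    measurable_fst.prodMk ((measurable_const.mul measurable_fst).add measurable_snd)
  rw [Measure.dirac_prod, Measure.map_map hg measurable_prodMk_left]
  have h1 : (fun p : ℝ × ℝ => (p.1, s * p.1 + p.2)) ∘ (Prod.mk v)
      = (Prod.mk v) ∘ (fun z : ℝ => (s * v) + z) := rfl
  rw [h1, ← Measure.map_map measurable_prodMk_left
    (show Measurable (fun z : ℝ => s * v + z) from measurable_const.add measurable_id)]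
  congr 1
  rw [show (fun z : ℝ => s * v + z) = (s * v + ·) from rfl, gaussianReal_map_const_add,
    zero_add, mul_comm]

lemma aux_map_line (s v : ℝ) :
    Measure.map (fun p : ℝ × ℝ => s * p.1 + p.2) ((Measure.dirac v).prod (gaussianReal 0 1))
      = gaussianReal (v * s) 1 := by
  have hline : Measurable fun p : ℝ × ℝ => s * p.1 + p.2 :=
    (measurable_const.mul measurable_fst).add measurable_snd
  rw [Measure.dirac_prod, Measure.map_map hline measurable_prodMk_left]
  have h1 : (fun p : ℝ × ℝ => s * p.1 + p.2) ∘ (Prod.mk v) = (fun z : ℝ => (s * v) + z) := rfl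
  rw [h1, show (fun z : ℝ => s * v + z) = (s * v + ·) from rfl, gaussianReal_map_const_add,
    zero_add, mul_comm]

lemma aux_neg_gauss : Measure.map (fun x : ℝ => -x) (gaussianReal 0 1) = gaussianReal 0 1 := by
  have h := gaussianReal_map_const_mul (μ := 0) (v := 1) (-1)
  have h2 : (NNReal.mk ((-1:ℝ)^2) (sq_nonneg _) : ℝ≥0) = 1 := by ext; norm_num
  rw [mul_zero, mul_one, h2] at h
  rw [show (fun x : ℝ => -x) = ((-1 : ℝ) * ·) from funext fun x => by ring]
  exact h

lemma aux_gauss_shift (a : ℝ) :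
    (gaussianReal 0 1).map (· + a) = gaussianReal a 1 := by
  rw [gaussianReal_map_add_const, zero_add]

lemma aux_logcosh (x : ℝ) : |Real.log (Real.cosh x)| ≤ |x| := by
  have h1 : 0 ≤ Real.log (Real.cosh x) := Real.log_nonneg (Real.one_le_cosh x)
  rw [abs_of_nonneg h1, Real.log_le_iff_le_exp (Real.cosh_pos x), Real.cosh_eq]
  have h2 := Real.exp_le_exp.mpr (le_abs_self x)
  have h3 := Real.exp_le_exp.mpr (neg_le_abs x)
  linarith

lemma aux_int_id : Integrable (fun x : ℝ => x) (gaussianReal 0 1) := by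
  rw [gaussianReal_of_var_ne_zero _ one_ne_zero]
  have hmeas : Measurable fun x : ℝ => (gaussianPDFReal 0 1 x).toNNReal :=
    (measurable_gaussianPDFReal 0 1).real_toNNReal
  have hrepr : volume.withDensity (gaussianPDF 0 1)
      = volume.withDensity (fun x => ((gaussianPDFReal 0 1 x).toNNReal : ℝ≥0∞)) := rfl
  rw [hrepr, integrable_withDensity_iff_integrable_smul hmeas]
  have hInt : Integrable (fun x : ℝ => (√(2 * π * ((1:ℝ≥0) : ℝ)))⁻¹ * (x * rexp (-(1/2 : ℝ) * x ^ 2))) volume :=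
    (integrable_mul_exp_neg_mul_sq (by norm_num : (0:ℝ) < 1/2)).const_mul _
  refine hInt.congr (ae_of_all _ fun x => ?_)
  have hco : ((gaussianPDFReal 0 1 x).toNNReal : ℝ) = gaussianPDFReal 0 1 x :=
    Real.coe_toNNReal _ (gaussianPDFReal_nonneg _ _ _)
  simp only [NNReal.smul_def, hco, smul_eq_mul]
  simp only [gaussianPDFReal]
  rw [show -(x - 0)^2 / (2 * ((1:ℝ≥0):ℝ)) = -(1/2 : ℝ) * x^2 by push_cast; ring]
  ring

lemma aux_int_id' (a : ℝ) : Integrable (fun x : ℝ => x) (gaussianReal a 1) := by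
  rw [← aux_gauss_shift a]
  have hmm : AEStronglyMeasurable (fun x : ℝ => x) ((gaussianReal 0 1).map (· + a)) :=
    measurable_id.stronglyMeasurable.aestronglyMeasurable
  have hf : AEMeasurable (fun x : ℝ => x + a) (gaussianReal 0 1) :=
    (measurable_id.add_const a).aemeasurable
  rw [integrable_map_measure hmm hf]
  exact aux_int_id.add (integrable_const a)

lemma aux_int_bound (a : ℝ) {F : ℝ → ℝ} (hF : AEStronglyMeasurable F (gaussianReal a 1))
    (c1 c2 : ℝ) (hb : ∀ y, |F y| ≤ c1 + c2 * |y|) : Integrable F (gaussianReal a 1) := by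
  have h1 : Integrable (fun y : ℝ => c1 + c2 * |y|) (gaussianReal a 1) :=
    (integrable_const c1).add (((aux_int_id' a).abs).const_mul c2)
  exact h1.mono' hF (ae_of_all _ fun y => by simpa [Real.norm_eq_abs] using hb y)


/-- For `V` uniform on `{-1,+1}`, `Z` standard Gaussian independent of `V`,
and `γ > 0`, the mutual information `I(V; √γ·V + Z)` equals `γ - E[log cosh(√γ·Z + γ)]`. -/
theorem stmt2
    {Ω : Type*} [MeasureSpace Ω] [IsProbabilityMeasure (ℙ : Measure Ω)]
    (V Z : Ω → ℝ) (hV : Measurable V) (hZ : Measurable Z)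
    (hVlaw : Measure.map V ℙ
      = (1 / 2 : ℝ≥0∞) • (Measure.dirac (-1 : ℝ) + Measure.dirac (1 : ℝ)))
    (hZlaw : Measure.map Z ℙ = gaussianReal 0 1)
    (hind : IndepFun V Z ℙ)
    (γ : ℝ) (hγ : 0 < γ) :
    ∫ p, Real.log
        ((Measure.rnDeriv
            (Measure.map (fun ω => (V ω, Real.sqrt γ * V ω + Z ω)) ℙ)
            ((Measure.map V ℙ).prod
              (Measure.map (fun ω => Real.sqrt γ * V ω + Z ω) ℙ))) p).toReal
        ∂(Measure.map (fun ω => (V ω, Real.sqrt γ * V ω + Z ω)) ℙ)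
      = γ - ∫ ω, Real.log (Real.cosh (Real.sqrt γ * Z ω + γ)) ∂ℙ := by
  set s := Real.sqrt γ with hs_def
  have hs2 : s * s = γ := Real.mul_self_sqrt hγ.le
  have hs0 : (0:ℝ) ≤ s := Real.sqrt_nonneg γ
  have hY : Measurable fun ω => s * V ω + Z ω := (measurable_const.mul hV).add hZ
  have hpair : Measurable fun ω => (V ω, s * V ω + Z ω) := hV.prodMk hY
  have hg : Measurable fun p : ℝ × ℝ => (p.1, s * p.1 + p.2) :=
    measurable_fst.prodMk ((measurable_const.mul measurable_fst).add measurable_snd)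
  have hline : Measurable fun p : ℝ × ℝ => s * p.1 + p.2 :=
    (measurable_const.mul measurable_fst).add measurable_snd
  -- law of the pair (V, Z)
  have hVZ : Measure.map (fun ω => (V ω, Z ω)) ℙ
      = ((1/2 : ℝ≥0∞) • (Measure.dirac (-1:ℝ) + Measure.dirac (1:ℝ))).prod (gaussianReal 0 1) := by
    rw [← hVlaw, ← hZlaw]
    exact (indepFun_iff_map_prod_eq_prod_map_map hV.aemeasurable hZ.aemeasurable).mp hind
  have hprod_split : ((1/2 : ℝ≥0∞) • (Measure.dirac (-1:ℝ) + Measure.dirac (1:ℝ))).prod (gaussianReal 0 1)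
      = (1/2 : ℝ≥0∞) • ((Measure.dirac (-1:ℝ)).prod (gaussianReal 0 1)
        + (Measure.dirac (1:ℝ)).prod (gaussianReal 0 1)) := by
    rw [aux_smul_prod, Measure.add_prod]
  -- law of the pair (V, Y)
  have hcomp1 : (fun ω => (V ω, s * V ω + Z ω))
      = (fun p : ℝ × ℝ => (p.1, s * p.1 + p.2)) ∘ (fun ω => (V ω, Z ω)) := rfl
  have hjoint : Measure.map (fun ω => (V ω, s * V ω + Z ω)) ℙ
      = (1/2 : ℝ≥0∞) • (Measure.map (Prod.mk (-1:ℝ)) (gaussianReal ((-1) * s) 1)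
        + Measure.map (Prod.mk (1:ℝ)) (gaussianReal (1 * s) 1)) := by
    rw [hcomp1, ← Measure.map_map hg (hV.prodMk hZ), hVZ, hprod_split, Measure.map_smul,
      Measure.map_add _ _ hg, aux_map_pair, aux_map_pair]
  -- law of Y
  have hcomp2 : (fun ω => s * V ω + Z ω)
      = (fun p : ℝ × ℝ => s * p.1 + p.2) ∘ (fun ω => (V ω, Z ω)) := rfl
  have hYlaw : Measure.map (fun ω => s * V ω + Z ω) ℙ
      = (1/2 : ℝ≥0∞) • (gaussianReal (-s) 1 + gaussianReal s 1) := by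
    rw [hcomp2, ← Measure.map_map hline (hV.prodMk hZ), hVZ, hprod_split, Measure.map_smul,
      Measure.map_add _ _ hline, aux_map_line, aux_map_line, neg_one_mul, one_mul]
  -- the density
  set f : ℝ × ℝ → ℝ≥0∞ := fun p => ENNReal.ofReal (rexp (s * p.1 * p.2) / Real.cosh (s * p.2))
    with hf_def
  have hf_meas : Measurable f := by
    apply Measurable.ennreal_ofReal
    fun_prop
  have hν : ((Measure.map V ℙ).prod (Measure.map (fun ω => s * V ω + Z ω) ℙ)).withDensity f
      = Measure.map (fun ω => (V ω, s * V ω + Z ω)) ℙ := by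
    have hm1 : (((1/2 : ℝ≥0∞) • (gaussianReal (-s) 1 + gaussianReal s 1)).withDensity
        (fun y => f ((-1:ℝ), y))) = gaussianReal ((-1:ℝ) * s) 1 :=
      aux_mixture_withDensity s (Or.inr rfl)
    have hm2 : (((1/2 : ℝ≥0∞) • (gaussianReal (-s) 1 + gaussianReal s 1)).withDensity
        (fun y => f ((1:ℝ), y))) = gaussianReal ((1:ℝ) * s) 1 :=
      aux_mixture_withDensity s (Or.inl rfl)
    rw [hVlaw, hYlaw, aux_smul_prod, Measure.add_prod, Measure.dirac_prod, Measure.dirac_prod,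
      withDensity_smul_measure, withDensity_add_measure, aux_withDensity_map _ _ hf_meas,
      aux_withDensity_map _ _ hf_meas, hm1, hm2, hjoint]
  haveI inst1 : IsProbabilityMeasure (Measure.map V ℙ) := Measure.isProbabilityMeasure_map hV.aemeasurable
  haveI inst2 : IsProbabilityMeasure (Measure.map (fun ω => s * V ω + Z ω) ℙ) :=
    Measure.isProbabilityMeasure_map hY.aemeasurable
  have hac : Measure.map (fun ω => (V ω, s * V ω + Z ω)) ℙ
      ≪ (Measure.map V ℙ).prod (Measure.map (fun ω => s * V ω + Z ω) ℙ) := by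
    rw [← hν]; exact withDensity_absolutelyContinuous _ _
  have hrn : (Measure.rnDeriv (Measure.map (fun ω => (V ω, s * V ω + Z ω)) ℙ)
      ((Measure.map V ℙ).prod (Measure.map (fun ω => s * V ω + Z ω) ℙ)))
      =ᵐ[Measure.map (fun ω => (V ω, s * V ω + Z ω)) ℙ] f := by
    have h0 := Measure.rnDeriv_withDensity
      ((Measure.map V ℙ).prod (Measure.map (fun ω => s * V ω + Z ω) ℙ)) hf_meas
    rw [hν] at h0
    exact h0.filter_mono hac.ae_le
  -- rewrite the integrand
  have hL1 : ∫ p, Real.log ((Measure.rnDeriv (Measure.map (fun ω => (V ω, s * V ω + Z ω)) ℙ)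
        ((Measure.map V ℙ).prod (Measure.map (fun ω => s * V ω + Z ω) ℙ))) p).toReal
        ∂(Measure.map (fun ω => (V ω, s * V ω + Z ω)) ℙ)
      = ∫ p : ℝ × ℝ, (s * p.1 * p.2 - Real.log (Real.cosh (s * p.2)))
        ∂(Measure.map (fun ω => (V ω, s * V ω + Z ω)) ℙ) := by
    refine integral_congr_ae ?_
    filter_upwards [hrn] with p hp
    rw [hp, hf_def]
    have hc : (0:ℝ) < Real.cosh (s * p.2) := Real.cosh_pos _
    rw [ENNReal.toReal_ofReal (div_nonneg (Real.exp_pos _).le hc.le),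
      Real.log_div (Real.exp_ne_zero _) hc.ne', Real.log_exp]
  have hcont1 : Continuous fun p : ℝ × ℝ => s * p.1 * p.2 - Real.log (Real.cosh (s * p.2)) := by
    have hcosh : Continuous fun p : ℝ × ℝ => Real.cosh (s * p.2) :=
      Real.continuous_cosh.comp (continuous_const.mul continuous_snd)
    exact ((continuous_const.mul continuous_fst).mul continuous_snd).sub
      (hcosh.log fun p => (Real.cosh_pos _).ne')
  have hL2 : ∫ p : ℝ × ℝ, (s * p.1 * p.2 - Real.log (Real.cosh (s * p.2)))
        ∂(Measure.map (fun ω => (V ω, s * V ω + Z ω)) ℙ)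
      = ∫ ω, (s * V ω * (s * V ω + Z ω)
          - Real.log (Real.cosh (s * (s * V ω + Z ω)))) ∂ℙ :=
    integral_map hpair.aemeasurable hcont1.aestronglyMeasurable
  -- a.e. properties of V
  have hsetm : MeasurableSet ({-1, 1} : Set ℝ) := (measurableSet_singleton (1:ℝ)).insert (-1)
  have hVae : ∀ᵐ ω ∂ℙ, |V ω| = 1 := by
    have h0 : ℙ (V ⁻¹' ({-1, 1} : Set ℝ)ᶜ) = 0 := by
      have hmap := Measure.map_apply hV hsetm.compl (μ := ℙ)
      rw [← hmap, hVlaw]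
      simp [Measure.dirac_apply' _ hsetm.compl]
    have hmem : ∀ᵐ ω ∂ℙ, V ω ∈ ({-1, 1} : Set ℝ) := by
      rw [ae_iff]; exact h0
    filter_upwards [hmem] with ω h
    simp only [Set.mem_insert_iff, Set.mem_singleton_iff] at h
    rcases h with h | h <;> rw [h] <;> norm_num
  -- integrability
  have hIntZ : Integrable Z ℙ := by
    have h1 : Integrable (fun x : ℝ => x) (Measure.map Z ℙ) := by rw [hZlaw]; exact aux_int_id
    have hmm : AEStronglyMeasurable (fun x : ℝ => x) (Measure.map Z ℙ) :=
      measurable_id.stronglyMeasurable.aestronglyMeasurable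
    exact (integrable_map_measure hmm hZ.aemeasurable).mp h1
  have hbound : Integrable (fun ω => γ + s * |Z ω|) ℙ :=
    (integrable_const γ).add (hIntZ.abs.const_mul s)
  have habs : ∀ᵐ ω ∂ℙ, |s * V ω + Z ω| ≤ s + |Z ω| := by
    filter_upwards [hVae] with ω h
    calc |s * V ω + Z ω| ≤ |s * V ω| + |Z ω| := abs_add_le _ _
      _ = s + |Z ω| := by rw [abs_mul, abs_of_nonneg hs0, h, mul_one]
  have hI1 : Integrable (fun ω => s * V ω * (s * V ω + Z ω)) ℙ := by
    refine hbound.mono' ((measurable_const.mul hV).mul hY).aestronglyMeasurable ?_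
    filter_upwards [hVae, habs] with ω h h2
    rw [Real.norm_eq_abs, abs_mul, abs_mul, abs_of_nonneg hs0, h, mul_one]
    calc s * |s * V ω + Z ω| ≤ s * (s + |Z ω|) := by
          exact mul_le_mul_of_nonneg_left h2 hs0
      _ = γ + s * |Z ω| := by rw [← hs2]; ring
  have hI2 : Integrable (fun ω => Real.log (Real.cosh (s * (s * V ω + Z ω)))) ℙ := by
    have hm : Measurable fun ω => Real.log (Real.cosh (s * (s * V ω + Z ω))) := by
      apply Measurable.log
      exact Real.continuous_cosh.measurable.comp (measurable_const.mul hY)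
    refine hbound.mono' hm.aestronglyMeasurable ?_
    filter_upwards [habs] with ω h2
    rw [Real.norm_eq_abs]
    calc |Real.log (Real.cosh (s * (s * V ω + Z ω)))| ≤ |s * (s * V ω + Z ω)| := aux_logcosh _
      _ = s * |s * V ω + Z ω| := by rw [abs_mul, abs_of_nonneg hs0]
      _ ≤ s * (s + |Z ω|) := mul_le_mul_of_nonneg_left h2 hs0
      _ = γ + s * |Z ω| := by rw [← hs2]; ring
  have hIntV : Integrable V ℙ := by
    refine (integrable_const (1:ℝ)).mono' hV.aestronglyMeasurable ?_
    filter_upwards [hVae] with ω h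
    rw [Real.norm_eq_abs, h]
  have hVZle : Integrable (fun ω => V ω * Z ω) ℙ := by
    refine hIntZ.abs.mono' (hV.mul hZ).aestronglyMeasurable ?_
    filter_upwards [hVae] with ω h
    rw [Real.norm_eq_abs, abs_mul, h, one_mul]
  -- ∫ V = 0
  have hVint : ∫ ω, V ω ∂ℙ = 0 := by
    have hmm : AEStronglyMeasurable (fun x : ℝ => x) (Measure.map V ℙ) :=
      measurable_id.stronglyMeasurable.aestronglyMeasurable
    have h1 := integral_map hV.aemeasurable hmm
    rw [hVlaw] at h1
    have hd1 : Integrable (fun x : ℝ => x) (Measure.dirac (-1:ℝ)) :=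
      (integrable_const (-1:ℝ)).congr (ae_eq_dirac (fun x : ℝ => x)).symm
    have hd2 : Integrable (fun x : ℝ => x) (Measure.dirac (1:ℝ)) :=
      (integrable_const (1:ℝ)).congr (ae_eq_dirac (fun x : ℝ => x)).symm
    rw [integral_smul_measure, integral_add_measure hd1 hd2, integral_dirac, integral_dirac] at h1
    rw [← h1]
    norm_num
  -- part A
  have hA : ∫ ω, s * V ω * (s * V ω + Z ω) ∂ℙ = γ := by
    have hid : (fun ω => s * V ω * (s * V ω + Z ω)) =ᵐ[ℙ] fun ω => γ + s * (V ω * Z ω) := by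
      filter_upwards [hVae] with ω h
      have hvv : V ω * V ω = 1 := by
        have h2 := abs_mul_abs_self (V ω)
        rw [h] at h2
        linarith
      linear_combination s * s * hvv + hs2
    rw [integral_congr_ae hid, integral_add (integrable_const γ) (hVZle.const_mul s),
      integral_const, integral_const_mul]
    have hmul := hind.integral_mul_eq_mul_integral hIntV.aestronglyMeasurable hIntZ.aestronglyMeasurable
    have : ∫ ω, V ω * Z ω ∂ℙ = (∫ ω, V ω ∂ℙ) * ∫ ω, Z ω ∂ℙ := hmul
    rw [this, hVint]
    simp [measure_univ]
  -- part B
  have hcont2 : Continuous fun y : ℝ => Real.log (Real.cosh (s * y)) :=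
    (Real.continuous_cosh.comp (continuous_const.mul continuous_id)).log
      fun y => (Real.cosh_pos _).ne'
  have hcont3 : Continuous fun x : ℝ => Real.log (Real.cosh (s * x + γ)) :=
    (Real.continuous_cosh.comp ((continuous_const.mul continuous_id).add continuous_const)).log
      fun y => (Real.cosh_pos _).ne'
  have hgaussint : ∀ a : ℝ, Integrable (fun y => Real.log (Real.cosh (s * y))) (gaussianReal a 1) := by
    intro a
    refine aux_int_bound a hcont2.aestronglyMeasurable 0 s fun y => ?_
    calc |Real.log (Real.cosh (s * y))| ≤ |s * y| := aux_logcosh _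
      _ = 0 + s * |y| := by rw [abs_mul, abs_of_nonneg hs0, zero_add]
  have hB : ∫ ω, Real.log (Real.cosh (s * (s * V ω + Z ω))) ∂ℙ
      = ∫ ω, Real.log (Real.cosh (s * Z ω + γ)) ∂ℙ := by
    have hLB : ∫ ω, Real.log (Real.cosh (s * (s * V ω + Z ω))) ∂ℙ
        = ∫ y, Real.log (Real.cosh (s * y))
            ∂((1/2 : ℝ≥0∞) • (gaussianReal (-s) 1 + gaussianReal s 1)) := by
      rw [← hYlaw]
      exact (integral_map hY.aemeasurable hcont2.aestronglyMeasurable).symm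
    have hRB : ∫ ω, Real.log (Real.cosh (s * Z ω + γ)) ∂ℙ
        = ∫ x, Real.log (Real.cosh (s * x + γ)) ∂(gaussianReal 0 1) := by
      rw [← hZlaw]
      exact (integral_map hZ.aemeasurable hcont3.aestronglyMeasurable).symm
    have hplus : ∫ y, Real.log (Real.cosh (s * y)) ∂(gaussianReal s 1)
        = ∫ x, Real.log (Real.cosh (s * x + γ)) ∂(gaussianReal 0 1) := by
      have hm : AEMeasurable (fun x : ℝ => x + s) (gaussianReal 0 1) :=
        (measurable_id.add_const s).aemeasurable
      rw [← aux_gauss_shift s, integral_map hm (hcont2.aestronglyMeasurable)]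
      refine integral_congr_ae (ae_of_all _ fun x => ?_)
      show Real.log (Real.cosh (s * (x + s))) = Real.log (Real.cosh (s * x + γ))
      rw [show s * (x + s) = s * x + γ by rw [mul_add, hs2]]
    have hminus : ∫ y, Real.log (Real.cosh (s * y)) ∂(gaussianReal (-s) 1)
        = ∫ x, Real.log (Real.cosh (s * x + γ)) ∂(gaussianReal 0 1) := by
      have hm : AEMeasurable (fun x : ℝ => x + -s) (gaussianReal 0 1) :=
        (measurable_id.add_const (-s)).aemeasurable
      have hsm2 : AEStronglyMeasurable (fun y : ℝ => Real.log (Real.cosh (s * (y + -s))))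
          (Measure.map (fun x : ℝ => -x) (gaussianReal 0 1)) :=
        ((Real.continuous_cosh.comp (continuous_const.mul (continuous_id.add continuous_const))).log
          fun y => (Real.cosh_pos _).ne').aestronglyMeasurable
      have hneg := integral_map (φ := fun x : ℝ => -x)
        (f := fun y : ℝ => Real.log (Real.cosh (s * (y + -s))))
        measurable_neg.aemeasurable hsm2
      rw [aux_neg_gauss] at hneg
      rw [← aux_gauss_shift (-s), integral_map hm (hcont2.aestronglyMeasurable)]
      show (∫ x, Real.log (Real.cosh (s * (x + -s))) ∂(gaussianReal 0 1))
        = ∫ x, Real.log (Real.cosh (s * x + γ)) ∂(gaussianReal 0 1)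
      rw [hneg]
      refine integral_congr_ae (ae_of_all _ fun x => ?_)
      show Real.log (Real.cosh (s * (-x + -s))) = Real.log (Real.cosh (s * x + γ))
      rw [show s * (-x + -s) = -(s * x + γ) by linear_combination (-1 : ℝ) * hs2,
        Real.cosh_neg]
    rw [hLB, hRB, integral_smul_measure, integral_add_measure (hgaussint _) (hgaussint _),
      hplus, hminus]
    rw [ENNReal.toReal_div]
    norm_num
    ring
  rw [hL1, hL2, integral_sub hI1 hI2, hA, hB]
end

section
/- For Z standard Gaussian and γ > 0, one has E[tanh(√γ·Z + γ)] = E[tanh²(√γ·Z + γ)]. -/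
open MeasureTheory ProbabilityTheory Real

lemma tanh_key (u : ℝ) :
    (Real.tanh (-u) - Real.tanh (-u) ^ 2) * Real.exp (-(2 * u))
      = -(Real.tanh u - Real.tanh u ^ 2) := by
  have ht : Real.exp u ≠ 0 := (Real.exp_pos u).ne'
  simp only [Real.tanh_eq_sinh_div_cosh, Real.sinh_eq, Real.cosh_eq, Real.exp_neg, neg_neg]
  rw [show (2 * u) = u + u by ring, Real.exp_add]
  have hc : (Real.exp u)⁻¹ + Real.exp u ≠ 0 := by positivity
  have hc' : Real.exp u + (Real.exp u)⁻¹ ≠ 0 := by positivity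
  field_simp
  ring

lemma continuous_tanh' : Continuous Real.tanh := by
  have : Real.tanh = fun x => Real.sinh x / Real.cosh x := by
    funext x; exact Real.tanh_eq_sinh_div_cosh x
  rw [this]
  exact Real.continuous_sinh.div Real.continuous_cosh fun x => (Real.cosh_pos x).ne'

lemma abs_tanh_le_one (x : ℝ) : |Real.tanh x| ≤ 1 := by
  rw [Real.tanh_eq_sinh_div_cosh, abs_div, abs_of_pos (Real.cosh_pos x),
    div_le_one (Real.cosh_pos x)]
  nlinarith [Real.cosh_sq_sub_sinh_sq x, sq_abs (Real.sinh x), abs_nonneg (Real.sinh x),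
    Real.cosh_pos x]

/-- For `Z ~ N(0,1)` and `γ > 0`,
`E[tanh(√γ·Z + γ)] = E[tanh²(√γ·Z + γ)]` (Nishimori identity). -/
theorem stmt5 (γ : ℝ) (hγ : 0 < γ) :
    ∫ z, Real.tanh (Real.sqrt γ * z + γ) ∂(gaussianReal 0 1)
      = ∫ z, Real.tanh (Real.sqrt γ * z + γ) ^ 2 ∂(gaussianReal 0 1) := by
  have hsq : Real.sqrt γ * Real.sqrt γ = γ := Real.mul_self_sqrt hγ.le
  have hdens : ∀ g : ℝ → ℝ, ∫ z, g z ∂(gaussianReal 0 1)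
      = ∫ z, gaussianPDFReal 0 1 z * g z := by
    intro g
    rw [gaussianReal_of_var_ne_zero _ one_ne_zero]
    have hpdf : gaussianPDF 0 1 = fun x => ((gaussianPDFReal 0 1 x).toNNReal : ENNReal) := by
      funext x
      simp [gaussianPDF, ENNReal.ofReal]
    rw [hpdf, integral_withDensity_eq_integral_smul
      ((measurable_gaussianPDFReal 0 1).real_toNNReal)]
    congr 1
    funext x
    rw [NNReal.smul_def, Real.coe_toNNReal _ (gaussianPDFReal_nonneg 0 1 x), smul_eq_mul]
  rw [hdens, hdens]
  set F : ℝ → ℝ := fun z => gaussianPDFReal 0 1 z *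
      (Real.tanh (Real.sqrt γ * z + γ) - Real.tanh (Real.sqrt γ * z + γ) ^ 2) with hF
  have hInt1 : Integrable (fun z => gaussianPDFReal 0 1 z * Real.tanh (Real.sqrt γ * z + γ)) := by
    simpa [mul_comm] using (integrable_gaussianPDFReal 0 1).bdd_mul (c := 1)
      (continuous_tanh'.comp (by continuity)).aestronglyMeasurable
      (Filter.Eventually.of_forall fun z => by rw [Real.norm_eq_abs]; exact abs_tanh_le_one _)
  have hInt2 : Integrable (fun z => gaussianPDFReal 0 1 z *
      Real.tanh (Real.sqrt γ * z + γ) ^ 2) := by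
    simpa [mul_comm] using (integrable_gaussianPDFReal 0 1).bdd_mul (c := 1)
      ((continuous_tanh'.comp (by continuity)).pow 2).aestronglyMeasurable
      (Filter.Eventually.of_forall fun z => by
        rw [Real.norm_eq_abs, Pi.pow_apply, abs_pow, ← one_pow 2]
        exact pow_le_pow_left₀ (abs_nonneg _) (abs_tanh_le_one _) 2)
  have hsub : ∫ z, F z = (∫ z, gaussianPDFReal 0 1 z * Real.tanh (Real.sqrt γ * z + γ))
      - ∫ z, gaussianPDFReal 0 1 z * Real.tanh (Real.sqrt γ * z + γ) ^ 2 := by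
    rw [← integral_sub hInt1 hInt2]
    congr 1; funext z; simp only [hF]; ring
  have h2 : ∀ z, F (-(z + 2 * Real.sqrt γ)) = -F z := by
    intro z
    have harg : Real.sqrt γ * (-(z + 2 * Real.sqrt γ)) + γ
        = -(Real.sqrt γ * z + γ) := by nlinarith [hsq]
    have hpdf : gaussianPDFReal 0 1 (-(z + 2 * Real.sqrt γ))
        = gaussianPDFReal 0 1 z * Real.exp (-(2 * (Real.sqrt γ * z + γ))) := by
      simp only [gaussianPDFReal, NNReal.coe_one, mul_one, sub_zero]
      rw [mul_assoc, ← Real.exp_add]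
      congr 1
      rw [Real.exp_eq_exp]
      nlinarith [hsq]
    simp only [hF, harg, hpdf]
    have hk := tanh_key (Real.sqrt γ * z + γ)
    linear_combination gaussianPDFReal 0 1 z * hk
  have h1 : ∫ z, F (-(z + 2 * Real.sqrt γ)) = ∫ z, F z := by
    calc ∫ z, F (-(z + 2 * Real.sqrt γ))
        = ∫ z, F (-z) := integral_add_right_eq_self (fun z => F (-z)) (2 * Real.sqrt γ)
      _ = ∫ z, F z := integral_neg_eq_self F volume
  have hzero : ∫ z, F z = 0 := by
    have hneg : ∫ z, F z = -∫ z, F z := by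
      conv_lhs => rw [← h1]
      simp_rw [h2]
      exact integral_neg F
    linarith
  linarith [hsub, hzero]
end
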